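/- The graph G₁ has no divisor class of degree 2 and Baker–Norine rank at least 1; that is, every divisor D on G₁ with deg(D) = 2 satisfies r(D) ≤ 0. -/

import Mathlib

open scoped Classical

namespace BNGraph

variable {V : Type} [Fintype V]

/-- The degree of a divisor `D : V → ℤ`: the sum of its values. -/
def degSum (D : V → ℤ) : ℤ := ∑ v, D v

/-- A divisor is effective if all its values are nonnegative. -/
def Effective (D : V → ℤ) : Prop := ∀ v, 0 ≤ D v

/-- The combinatorial Laplacian of a graph, as a homomorphism on divisors. -/
noncomputable def lap (G : SimpleGraph V) : (V → ℤ) →+ (V → ℤ) where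
  toFun f := fun v => (G.degree v : ℤ) * f v - ∑ w ∈ G.neighborFinset v, f w
  map_zero' := by
    funext v; simp
  map_add' f g := by
    funext v
    simp only [Pi.add_apply, Finset.sum_add_distrib]
    ring

/-- The subgroup of principal divisors: the image of the Laplacian. -/
noncomputable def Principal (G : SimpleGraph V) : AddSubgroup (V → ℤ) := (lap G).range

/-- Linear equivalence of divisors. -/
def LinEquiv (G : SimpleGraph V) (D D' : V → ℤ) : Prop := D - D' ∈ Principal G

/-- A divisor is winnable if it is linearly equivalent to an effective divisor. -/
def Winnable (G : SimpleGraph V) (D : V → ℤ) : Prop :=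
  ∃ E : V → ℤ, Effective E ∧ LinEquiv G D E

/-- The Baker–Norine rank of a divisor: the largest `r ≥ 0` such that `D - E` is
winnable for every effective divisor `E` of degree `r`, or `-1` if there is no such `r`
(equivalently, if `D` itself is not winnable). -/
noncomputable def bnRank (G : SimpleGraph V) (D : V → ℤ) : ℤ :=
  sSup {r : ℤ | r = -1 ∨ (0 ≤ r ∧
    ∀ E : V → ℤ, Effective E → degSum E = r → Winnable G (D - E))}

/-- The Picard group of a graph: divisors modulo principal divisors. -/
abbrev Pic (G : SimpleGraph V) : Type _ := (V → ℤ) ⧸ Principal G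

/-- The number of divisor classes of degree `d` and Baker–Norine rank `r`. -/
noncomputable def numClasses (G : SimpleGraph V) (d r : ℤ) : ℕ :=
  Set.ncard {c : Pic G | ∃ D : V → ℤ,
    QuotientAddGroup.mk' (Principal G) D = c ∧ degSum D = d ∧ bnRank G D = r}

/-- Two graphs have the same two-variable zeta function iff for every degree `d` and
rank `r` they have the same number of divisor classes of degree `d` and rank `r`. -/
def SameZeta {W : Type} [Fintype W] (G : SimpleGraph V) (G' : SimpleGraph W) : Prop :=
  ∀ d r : ℤ, numClasses G d r = numClasses G' d r

/-- Degree as a homomorphism on divisors. -/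
def degHom : (V → ℤ) →+ ℤ where
  toFun := degSum
  map_zero' := by simp [degSum]
  map_add' f g := by simp [degSum, Finset.sum_add_distrib]

/-- The subgroup of divisors of degree zero. -/
def Deg0 (V : Type) [Fintype V] : AddSubgroup (V → ℤ) := (degHom (V := V)).ker

/-- The Jacobian of a graph: divisor classes of degree zero. -/
noncomputable abbrev Jac (G : SimpleGraph V) : Type _ :=
  Deg0 V ⧸ ((Principal G).addSubgroupOf (Deg0 V))

/-- The number of connected components of the spanning subgraph with edge set `A`. -/
noncomputable def numComponents (V : Type) [Fintype V] (A : Set (Sym2 V)) : ℕ :=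
  Nat.card (SimpleGraph.fromEdgeSet A).ConnectedComponent

/-- The number of edges of a graph. -/
noncomputable def edgeCount (G : SimpleGraph V) : ℕ := Nat.card G.edgeSet

open MvPolynomial in
/-- The Tutte polynomial of `G`, as a polynomial in `ℤ[x, y]` with `x = X 0`, `y = X 1`:
`T_G(x,y) = Σ_{A ⊆ E(G)} (x−1)^(c(A)−c(E(G))) (y−1)^(c(A)+|A|−|V(G)|)`. -/
noncomputable def tutte (G : SimpleGraph V) : MvPolynomial (Fin 2) ℤ :=
  ∑ A ∈ G.edgeFinset.powerset,
    (X 0 - 1) ^ (numComponents V ↑A - numComponents V G.edgeSet) *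
    (X 1 - 1) ^ (numComponents V ↑A + A.card - Fintype.card V)




/-- `G₁`: the diamond graph (`K₄` minus an edge) on vertices `0,1,2,3`
(with `u = 0`, `v = 1` of degree 3 and `x = 2`, `y = 3` of degree 2),
with a triangle `0,4,5` attached at the vertex `u = 0`. -/
def G1 : SimpleGraph (Fin 6) :=
  SimpleGraph.fromEdgeSet
    {s(0,1), s(0,2), s(0,3), s(1,2), s(1,3), s(0,4), s(0,5), s(4,5)}

/-! ### Auxiliary machinery for the proof -/

section Aux

lemma G1_nbh0 : G1.neighborFinset 0 = {1,2,3,4,5} := by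
  ext w
  rw [SimpleGraph.mem_neighborFinset]
  simp only [SimpleGraph.mem_neighborFinset, G1, SimpleGraph.fromEdgeSet_adj,
    Set.mem_insert_iff, Set.mem_singleton_iff, Sym2.eq, Sym2.rel_iff',
    Finset.mem_insert, Finset.mem_singleton]
  fin_cases w <;> simp

lemma G1_nbh1 : G1.neighborFinset 1 = {0,2,3} := by
  ext w
  rw [SimpleGraph.mem_neighborFinset]
  simp only [SimpleGraph.mem_neighborFinset, G1, SimpleGraph.fromEdgeSet_adj,
    Set.mem_insert_iff, Set.mem_singleton_iff, Sym2.eq, Sym2.rel_iff',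
    Finset.mem_insert, Finset.mem_singleton]
  fin_cases w <;> simp

lemma G1_nbh2 : G1.neighborFinset 2 = {0,1} := by
  ext w
  rw [SimpleGraph.mem_neighborFinset]
  simp only [SimpleGraph.mem_neighborFinset, G1, SimpleGraph.fromEdgeSet_adj,
    Set.mem_insert_iff, Set.mem_singleton_iff, Sym2.eq, Sym2.rel_iff',
    Finset.mem_insert, Finset.mem_singleton]
  fin_cases w <;> simp

lemma G1_nbh3 : G1.neighborFinset 3 = {0,1} := by
  ext w
  rw [SimpleGraph.mem_neighborFinset]
  simp only [SimpleGraph.mem_neighborFinset, G1, SimpleGraph.fromEdgeSet_adj,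
    Set.mem_insert_iff, Set.mem_singleton_iff, Sym2.eq, Sym2.rel_iff',
    Finset.mem_insert, Finset.mem_singleton]
  fin_cases w <;> simp

lemma G1_nbh4 : G1.neighborFinset 4 = {0,5} := by
  ext w
  rw [SimpleGraph.mem_neighborFinset]
  simp only [SimpleGraph.mem_neighborFinset, G1, SimpleGraph.fromEdgeSet_adj,
    Set.mem_insert_iff, Set.mem_singleton_iff, Sym2.eq, Sym2.rel_iff',
    Finset.mem_insert, Finset.mem_singleton]
  fin_cases w <;> simp

lemma G1_nbh5 : G1.neighborFinset 5 = {0,4} := by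
  ext w
  rw [SimpleGraph.mem_neighborFinset]
  simp only [SimpleGraph.mem_neighborFinset, G1, SimpleGraph.fromEdgeSet_adj,
    Set.mem_insert_iff, Set.mem_singleton_iff, Sym2.eq, Sym2.rel_iff',
    Finset.mem_insert, Finset.mem_singleton]
  fin_cases w <;> simp

lemma G1_lap0 (f : Fin 6 → ℤ) : lap G1 f 0 = 5*f 0 - (f 1 + f 2 + f 3 + f 4 + f 5) := by
  show (G1.degree 0 : ℤ) * f 0 - ∑ w ∈ G1.neighborFinset 0, f w = _
  rw [SimpleGraph.degree, G1_nbh0]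
  rw [show ({1,2,3,4,5} : Finset (Fin 6)).card = 5 from rfl]
  rw [Finset.sum_insert (by decide), Finset.sum_insert (by decide),
    Finset.sum_insert (by decide), Finset.sum_insert (by decide), Finset.sum_singleton]
  push_cast; ring

lemma G1_lap1 (f : Fin 6 → ℤ) : lap G1 f 1 = 3*f 1 - (f 0 + f 2 + f 3) := by
  show (G1.degree 1 : ℤ) * f 1 - ∑ w ∈ G1.neighborFinset 1, f w = _
  rw [SimpleGraph.degree, G1_nbh1]
  rw [show ({0,2,3} : Finset (Fin 6)).card = 3 from rfl]
  rw [Finset.sum_insert (by decide), Finset.sum_insert (by decide), Finset.sum_singleton]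
  push_cast; ring

lemma G1_lap2 (f : Fin 6 → ℤ) : lap G1 f 2 = 2*f 2 - (f 0 + f 1) := by
  show (G1.degree 2 : ℤ) * f 2 - ∑ w ∈ G1.neighborFinset 2, f w = _
  rw [SimpleGraph.degree, G1_nbh2]
  rw [show ({0,1} : Finset (Fin 6)).card = 2 from rfl]
  rw [Finset.sum_insert (by decide), Finset.sum_singleton]
  push_cast; ring

lemma G1_lap3 (f : Fin 6 → ℤ) : lap G1 f 3 = 2*f 3 - (f 0 + f 1) := by
  show (G1.degree 3 : ℤ) * f 3 - ∑ w ∈ G1.neighborFinset 3, f w = _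
  rw [SimpleGraph.degree, G1_nbh3]
  rw [show ({0,1} : Finset (Fin 6)).card = 2 from rfl]
  rw [Finset.sum_insert (by decide), Finset.sum_singleton]
  push_cast; ring

lemma G1_lap4 (f : Fin 6 → ℤ) : lap G1 f 4 = 2*f 4 - (f 0 + f 5) := by
  show (G1.degree 4 : ℤ) * f 4 - ∑ w ∈ G1.neighborFinset 4, f w = _
  rw [SimpleGraph.degree, G1_nbh4]
  rw [show ({0,5} : Finset (Fin 6)).card = 2 from rfl]
  rw [Finset.sum_insert (by decide), Finset.sum_singleton]
  push_cast; ring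

lemma G1_lap5 (f : Fin 6 → ℤ) : lap G1 f 5 = 2*f 5 - (f 0 + f 4) := by
  show (G1.degree 5 : ℤ) * f 5 - ∑ w ∈ G1.neighborFinset 5, f w = _
  rw [SimpleGraph.degree, G1_nbh5]
  rw [show ({0,4} : Finset (Fin 6)).card = 2 from rfl]
  rw [Finset.sum_insert (by decide), Finset.sum_singleton]
  push_cast; ring

/-- An invariant functional on divisors of `G₁`, with values `(0,6,3,15,8,16)`
on the basis vectors: a generator of `Hom(Jac(G₁), ℤ/24) ≅ ℤ/24`. -/
def phiG1 (X : Fin 6 → ℤ) : ℤ := 6*X 1 + 3*X 2 + 15*X 3 + 8*X 4 + 16*X 5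

def cIntG1 : Fin 6 → ℤ := fun v =>
  if v = 1 then 6 else if v = 2 then 3 else if v = 3 then 15
  else if v = 4 then 8 else if v = 5 then 16 else 0

def ddG1 : Fin 6 → ZMod 24 := ![0, 6, 3, 15, 8, 16]

lemma ddG1_cast : ∀ u : Fin 6, ((cIntG1 u : ℤ) : ZMod 24) = ddG1 u := by decide

lemma keyB : ∀ a : ZMod 24, ∃ w : Fin 6, ∀ v : Fin 6, a ≠ ddG1 w + ddG1 v := by decide

lemma phiG1_lap (f : Fin 6 → ℤ) : phiG1 (lap G1 f) = 24 * (-2*f 0 + f 3 + f 5) := by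
  rw [phiG1, G1_lap1, G1_lap2, G1_lap3, G1_lap4, G1_lap5]; ring

lemma degSum_lap (f : Fin 6 → ℤ) : degSum (lap G1 f) = 0 := by
  rw [degSum, Fin.sum_univ_six, G1_lap0, G1_lap1, G1_lap2, G1_lap3, G1_lap4, G1_lap5]
  ring

lemma principal_dvd {X : Fin 6 → ℤ} (hX : X ∈ Principal G1) : (24 : ℤ) ∣ phiG1 X := by
  obtain ⟨f, rfl⟩ := hX
  exact ⟨-2*f 0 + f 3 + f 5, phiG1_lap f⟩

lemma principal_deg {X : Fin 6 → ℤ} (hX : X ∈ Principal G1) : degSum X = 0 := by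
  obtain ⟨f, rfl⟩ := hX
  exact degSum_lap f

lemma eff_deg_one (F : Fin 6 → ℤ) (hF : Effective F) (hd : degSum F = 1) :
    ∃ v, F = fun u => if u = v then 1 else 0 := by
  have h0 := hF 0; have h1 := hF 1; have h2 := hF 2
  have h3 := hF 3; have h4 := hF 4; have h5 := hF 5
  rw [degSum, Fin.sum_univ_six] at hd
  have hex : F 0 = 1 ∨ F 1 = 1 ∨ F 2 = 1 ∨ F 3 = 1 ∨ F 4 = 1 ∨ F 5 = 1 := by omega
  rcases hex with h|h|h|h|h|h
  · exact ⟨0, funext fun u => by fin_cases u <;> simp <;> omega⟩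
  · exact ⟨1, funext fun u => by fin_cases u <;> simp <;> omega⟩
  · exact ⟨2, funext fun u => by fin_cases u <;> simp <;> omega⟩
  · exact ⟨3, funext fun u => by fin_cases u <;> simp <;> omega⟩
  · exact ⟨4, funext fun u => by fin_cases u <;> simp <;> omega⟩
  · exact ⟨5, funext fun u => by fin_cases u <;> simp <;> omega⟩

lemma phiG1_ind (D : Fin 6 → ℤ) (w v : Fin 6) :
    phiG1 (fun u => D u - (if u = w then 1 else 0) - (if u = v then 1 else 0))
      = phiG1 D - cIntG1 w - cIntG1 v := by
  fin_cases w <;> fin_cases v <;> simp [phiG1, cIntG1] <;> ring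

lemma degSum_sub (A B : Fin 6 → ℤ) : degSum (A - B) = degSum A - degSum B := by
  simp [degSum, Finset.sum_sub_distrib]

lemma eff_degSum_nonneg {F : Fin 6 → ℤ} (hF : Effective F) : 0 ≤ degSum F :=
  Finset.sum_nonneg fun v _ => hF v

end Aux

/-- `G₁` has no divisor class of degree 2 and Baker–Norine rank at least 1: every
divisor of degree 2 on `G₁` has rank at most 0. -/
theorem G1_no_degTwo_rankGeOne_class :
    ∀ D : Fin 6 → ℤ, degSum D = 2 → bnRank G1 D ≤ 0 := by
  intro D hdeg
  unfold bnRank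
  apply csSup_le
  · exact ⟨-1, Or.inl rfl⟩
  rintro r (rfl | ⟨hr0, hP⟩)
  · norm_num
  by_contra hr
  push_neg at hr
  -- the witness vertex `w`
  obtain ⟨w, hw⟩ := keyB ((phiG1 D : ℤ) : ZMod 24)
  -- play against the effective divisor `E = r·δ_w`
  set E : Fin 6 → ℤ := fun u => if u = w then r else 0 with hEdef
  have hE : Effective E := by
    intro u; simp only [hEdef]; split <;> omega
  have hdegE : degSum E = r := by
    simp [degSum, hEdef]
  obtain ⟨F, hFeff, hlin⟩ := hP E hE hdegE
  have hmem : (D - E) - F ∈ Principal G1 := hlin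
  have hdegF : degSum F = 2 - r := by
    have h0 := principal_deg hmem
    rw [degSum_sub, degSum_sub, hdeg, hdegE] at h0
    omega
  have hFnn := eff_degSum_nonneg hFeff
  have hr2 : r ≤ 2 := by omega
  -- the effective degree-1 divisor `G' = F + (r-1)·δ_w`
  set G' : Fin 6 → ℤ := fun u => F u + (if u = w then r - 1 else 0) with hG'def
  have hG'eff : Effective G' := by
    intro u
    have := hFeff u
    simp only [hG'def]; split <;> omega
  have hdegG' : degSum G' = 1 := by
    simp only [degSum, hG'def, Finset.sum_add_distrib]
    rw [← degSum]
    simp [hdegF]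
    try omega
  obtain ⟨v, hv⟩ := eff_deg_one G' hG'eff hdegG'
  -- rewrite the principal divisor as `D - δ_w - δ_v`
  have hXeq : (D - E) - F
      = fun u => D u - (if u = w then 1 else 0) - (if u = v then 1 else 0) := by
    funext u
    have hGu : F u + (if u = w then r - 1 else 0) = (if u = v then 1 else 0) := by
      have := congrFun hv u
      simpa [hG'def] using this
    simp only [Pi.sub_apply, hEdef]
    by_cases huw : u = w <;> simp [huw] at hGu ⊢ <;> omega
  rw [hXeq] at hmem
  have hdvd := principal_dvd hmem
  rw [phiG1_ind] at hdvd
  have h0 : (((phiG1 D - cIntG1 w - cIntG1 v : ℤ)) : ZMod 24) = 0 :=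
    (ZMod.intCast_zmod_eq_zero_iff_dvd _ _).2 hdvd
  push_cast at h0
  rw [ddG1_cast, ddG1_cast] at h0
  exact hw v (by linear_combination h0)

end BNGraph
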